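/- arXiv:1304.6197 — 3 statements merged into one kernel-verified Lean document; each statement's English description precedes it below -/
import Mathlib

section
/- Let n ≥ 2 be an integer, θ ∈ (0, π/2) with n·θ ≤ 1, and define φ(k) = sin(kθ + (π - nθ)/2) / cos(nθ/2) for 0 ≤ k ≤ n. Then 1 ≤ φ(k) ≤ 1/cos(1/2) < √2 for all 0 ≤ k ≤ n, and φ(k) = φ(n-k). -/
/-- The sine profile `φ k = sin(kθ + (π - nθ)/2)/cos(nθ/2)` on a subdivided edge
satisfies `1 ≤ φ k ≤ 1/cos(1/2) < √2` for `0 ≤ k ≤ n`, and `φ k = φ (n - k)`. -/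
theorem stmt_2 (n : ℕ) (hn : 2 ≤ n) (θ : ℝ) (hθ : θ ∈ Set.Ioo 0 (Real.pi / 2))
    (hnθ : (n : ℝ) * θ ≤ 1) (φ : ℕ → ℝ)
    (hφ : ∀ k : ℕ, φ k =
      Real.sin ((k : ℝ) * θ + (Real.pi - (n : ℝ) * θ) / 2) / Real.cos ((n : ℝ) * θ / 2)) :
    (∀ k ≤ n, 1 ≤ φ k ∧ φ k ≤ 1 / Real.cos (1 / 2)) ∧
      (1 / Real.cos (1 / 2) < Real.sqrt 2) ∧
      (∀ k ≤ n, φ k = φ (n - k)) := by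
  obtain ⟨hθ0, hθpi⟩ := hθ
  have hpi : (3:ℝ) < Real.pi := Real.pi_gt_three
  have hnpos : (0:ℝ) < (n:ℝ) * θ := by positivity
  -- rewrite sin as cos
  have key : ∀ k : ℕ, φ k = Real.cos (((k:ℝ) - (n:ℝ)/2) * θ) / Real.cos ((n : ℝ) * θ / 2) := by
    intro k
    rw [hφ k]
    congr 1
    rw [show (k : ℝ) * θ + (Real.pi - (n : ℝ) * θ) / 2
        = ((k:ℝ) - (n:ℝ)/2) * θ + Real.pi / 2 by ring]
    exact Real.sin_add_pi_div_two _
  have hc2 : Real.cos (1/2) > 0 := Real.cos_pos_of_mem_Ioo (by constructor <;> nlinarith)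
  have hcpos : 0 < Real.cos ((n : ℝ) * θ / 2) := by
    apply Real.cos_pos_of_mem_Ioo
    constructor <;> nlinarith
  have hcge : Real.cos (1/2) ≤ Real.cos ((n : ℝ) * θ / 2) := by
    apply Real.cos_le_cos_of_nonneg_of_le_pi (by positivity) (by nlinarith) (by linarith)
  have habs : ∀ k : ℕ, k ≤ n → |((k:ℝ) - (n:ℝ)/2) * θ| ≤ (n : ℝ) * θ / 2 := by
    intro k hk
    have hkn : (k:ℝ) ≤ n := Nat.cast_le.mpr hk
    have hk0 : (0:ℝ) ≤ k := Nat.cast_nonneg k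
    rw [abs_le]
    constructor <;> nlinarith
  refine ⟨fun k hk => ?_, ?_, fun k hk => ?_⟩
  · have h := habs k hk
    rw [abs_le] at h
    have hcos : Real.cos ((n : ℝ) * θ / 2) ≤ Real.cos (((k:ℝ) - (n:ℝ)/2) * θ) := by
      rw [← Real.cos_abs (((k:ℝ) - (n:ℝ)/2) * θ)]
      apply Real.cos_le_cos_of_nonneg_of_le_pi (abs_nonneg _) (by nlinarith) (habs k hk)
    rw [key k]
    constructor
    · rw [le_div_iff₀ hcpos]; linarith
    · rw [div_le_div_iff₀ hcpos hc2]
      calc Real.cos (((k:ℝ) - (n:ℝ)/2) * θ) * Real.cos (1/2)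
          ≤ 1 * Real.cos ((n : ℝ) * θ / 2) := by
            nlinarith [Real.cos_le_one (((k:ℝ) - (n:ℝ)/2) * θ)]
        _ = 1 * Real.cos ((n : ℝ) * θ / 2) := rfl
  · have h4 : Real.cos (Real.pi / 4) < Real.cos (1/2) := by
      apply Real.cos_lt_cos_of_nonneg_of_le_pi (by positivity) (by linarith) (by linarith)
    rw [Real.cos_pi_div_four] at h4
    have hs2 : (0:ℝ) < Real.sqrt 2 := by positivity
    rw [div_lt_iff₀ hc2]
    nlinarith [Real.sq_sqrt (by norm_num : (2:ℝ) ≥ 0)]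
  · rw [key k, key (n - k)]
    have : ((n - k : ℕ) : ℝ) = (n : ℝ) - k := by
      rw [Nat.cast_sub hk]
    rw [this]
    congr 1
    rw [show ((n:ℝ) - k - (n:ℝ)/2) * θ = -(((k:ℝ) - (n:ℝ)/2) * θ) by ring, Real.cos_neg]
end

section
/- Let (V_o, w_o, μ_o) be a locally finite connected weighted graph with adapted weight σ_o : E_o → (0,1], and let (V, w, μ) be its modification with subdivision weight 𝔫 : E_o → ℕ, 𝔫 ≥ 2 (each edge e of E_o is replaced by a path of 𝔫(e) new edges with weights w = 𝔫(e)·w_o(e), new vertex measures μ(x_i^e) = 2 w_o(e) σ_o(e)²/𝔫(e), and μ restricted to V_o equals μ_o). Then the function σ defined by σ(x_i^e, x_{i+1}^e) = σ_o(e)/𝔫(e) is an adapted weight for (V, w, μ), i.e. σ takes values in (0,1] and (1/μ(x))·Σ_{y ~ x} w(x,y)σ(x,y)² ≤ 1 for all x ∈ V. -/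
open Classical in
/-- The new vertices of the modification: `(a, b, i)` with `(a,b)` an oriented
edge (i.e. `(a,b) ∈ Ep` and `w_o a b > 0`) and `1 ≤ i ≤ 𝔫(a,b) - 1`. -/
def NewV {Vo : Type*} (wo : Vo → Vo → ℝ) (n : Vo → Vo → ℕ) (Ep : Set (Vo × Vo)) : Type _ :=
  {p : Vo × Vo × ℕ //
    (p.1, p.2.1) ∈ Ep ∧ 0 < wo p.1 p.2.1 ∧ 1 ≤ p.2.2 ∧ p.2.2 ≤ n p.1 p.2.1 - 1}

/-- The vertex set of the modified graph: old vertices together with the new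
subdivision vertices. -/
abbrev MV {Vo : Type*} (wo : Vo → Vo → ℝ) (n : Vo → Vo → ℕ) (Ep : Set (Vo × Vo)) : Type _ :=
  Vo ⊕ NewV wo n Ep

open Classical in
/-- The edge weights of the modified graph: each oriented edge `e = (a,b)` is
subdivided into the path `a = x₀ᵉ ~ x₁ᵉ ~ ⋯ ~ x_{𝔫(e)}ᵉ = b`, and all the new
edges along `e` carry the weight `𝔫(e)·w_o(e)`. -/
noncomputable def mw {Vo : Type*} (wo : Vo → Vo → ℝ) (n : Vo → Vo → ℕ) (Ep : Set (Vo × Vo)) :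
    MV wo n Ep → MV wo n Ep → ℝ
  | Sum.inl _, Sum.inl _ => 0
  | Sum.inl x, Sum.inr p =>
      if (x = p.val.1 ∧ p.val.2.2 = 1) ∨
          (x = p.val.2.1 ∧ p.val.2.2 = n p.val.1 p.val.2.1 - 1)
      then (n p.val.1 p.val.2.1 : ℝ) * wo p.val.1 p.val.2.1 else 0
  | Sum.inr p, Sum.inl x =>
      if (x = p.val.1 ∧ p.val.2.2 = 1) ∨
          (x = p.val.2.1 ∧ p.val.2.2 = n p.val.1 p.val.2.1 - 1)
      then (n p.val.1 p.val.2.1 : ℝ) * wo p.val.1 p.val.2.1 else 0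
  | Sum.inr p, Sum.inr q =>
      if p.val.1 = q.val.1 ∧ p.val.2.1 = q.val.2.1 ∧
          (p.val.2.2 = q.val.2.2 + 1 ∨ q.val.2.2 = p.val.2.2 + 1)
      then (n p.val.1 p.val.2.1 : ℝ) * wo p.val.1 p.val.2.1 else 0

open Classical in
/-- The adapted weight of the modified graph: each new edge along the
subdivision of `e` has weight `σ_o(e)/𝔫(e)`. -/
noncomputable def mσ {Vo : Type*} (wo σo : Vo → Vo → ℝ) (n : Vo → Vo → ℕ)
    (Ep : Set (Vo × Vo)) : MV wo n Ep → MV wo n Ep → ℝ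
  | Sum.inl _, Sum.inl _ => 0
  | Sum.inl x, Sum.inr p =>
      if (x = p.val.1 ∧ p.val.2.2 = 1) ∨
          (x = p.val.2.1 ∧ p.val.2.2 = n p.val.1 p.val.2.1 - 1)
      then σo p.val.1 p.val.2.1 / (n p.val.1 p.val.2.1 : ℝ) else 0
  | Sum.inr p, Sum.inl x =>
      if (x = p.val.1 ∧ p.val.2.2 = 1) ∨
          (x = p.val.2.1 ∧ p.val.2.2 = n p.val.1 p.val.2.1 - 1)
      then σo p.val.1 p.val.2.1 / (n p.val.1 p.val.2.1 : ℝ) else 0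
  | Sum.inr p, Sum.inr q =>
      if p.val.1 = q.val.1 ∧ p.val.2.1 = q.val.2.1 ∧
          (p.val.2.2 = q.val.2.2 + 1 ∨ q.val.2.2 = p.val.2.2 + 1)
      then σo p.val.1 p.val.2.1 / (n p.val.1 p.val.2.1 : ℝ) else 0

/-- The vertex measure of the modified graph: old vertices keep their measure,
and each new vertex on the subdivision of `e` has measure `2·w_o(e)·σ_o(e)²/𝔫(e)`. -/
noncomputable def mμ {Vo : Type*} (wo σo : Vo → Vo → ℝ) (μo : Vo → ℝ)
    (n : Vo → Vo → ℕ) (Ep : Set (Vo × Vo)) : MV wo n Ep → ℝ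
  | Sum.inl x => μo x
  | Sum.inr p => 2 * wo p.val.1 p.val.2.1 * σo p.val.1 p.val.2.1 ^ 2 / (n p.val.1 p.val.2.1 : ℝ)

/-- The weight `σ(xᵢᵉ, xᵢ₊₁ᵉ) = σ_o(e)/𝔫(e)` is an adapted weight for the
modified weighted graph: it is symmetric, takes values in `(0,1]` on edges, and
satisfies `(1/μ(x))·Σ_y w(x,y)σ(x,y)² ≤ 1` at every vertex. -/
theorem stmt_6 {Vo : Type*} (wo σo : Vo → Vo → ℝ) (μo : Vo → ℝ)
    (n : Vo → Vo → ℕ) (Ep : Set (Vo × Vo))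
    (hwo_symm : ∀ x y, wo x y = wo y x) (hwo_nonneg : ∀ x y, 0 ≤ wo x y)
    (hμo_pos : ∀ x, 0 < μo x)
    (hloc : ∀ x, {y | 0 < wo x y}.Finite)
    (hσo_symm : ∀ x y, σo x y = σo y x)
    (hσo_edge : ∀ x y, 0 < wo x y → 0 < σo x y ∧ σo x y ≤ 1)
    (hadapt : ∀ x, ∑' y, wo x y * σo x y ^ 2 ≤ μo x)
    (hn_symm : ∀ x y, n x y = n y x) (hn2 : ∀ x y, 0 < wo x y → 2 ≤ n x y)
    (hEp_edge : ∀ p ∈ Ep, 0 < wo p.1 p.2)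
    (hEp_orient : ∀ x y, 0 < wo x y → Xor' ((x, y) ∈ Ep) ((y, x) ∈ Ep))
    :
    (∀ p q : MV wo n Ep, mσ wo σo n Ep p q = mσ wo σo n Ep q p) ∧
    (∀ p q : MV wo n Ep, 0 < mw wo n Ep p q →
      0 < mσ wo σo n Ep p q ∧ mσ wo σo n Ep p q ≤ 1) ∧
    (∀ p : MV wo n Ep,
      ∑' q : MV wo n Ep, mw wo n Ep p q * mσ wo σo n Ep p q ^ 2 ≤ mμ wo σo μo n Ep p) := by
  classical
  have hne : ∀ a b : Vo, 0 < wo a b → a ≠ b := by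
    intro a b hw hab
    rw [hab] at hw
    rcases hEp_orient b b hw with ⟨h1, h2⟩ | ⟨h1, h2⟩ <;> exact h2 h1
  have hnot_both : ∀ a b : Vo, 0 < wo a b → (a, b) ∈ Ep → (b, a) ∈ Ep → False := by
    intro a b hw h1 h2
    rcases hEp_orient a b hw with ⟨_, h⟩ | ⟨_, h⟩
    · exact h h2
    · exact h h1
  have hσ_bound : ∀ a b : Vo, 0 < wo a b →
      0 < σo a b / (n a b : ℝ) ∧ σo a b / (n a b : ℝ) ≤ 1 := by
    intro a b hw
    have hn : (2 : ℝ) ≤ (n a b : ℝ) := by exact_mod_cast hn2 a b hw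
    obtain ⟨hσ1, hσ2⟩ := hσo_edge a b hw
    constructor
    · exact div_pos hσ1 (by linarith)
    · rw [div_le_one (by linarith)]; linarith
  refine ⟨?_, ?_, ?_⟩
  · -- symmetry
    intro p q
    rcases p with x | p <;> rcases q with y | q
    · rfl
    · simp only [mσ]
    · simp only [mσ]
    · simp only [mσ]
      by_cases h : p.val.1 = q.val.1 ∧ p.val.2.1 = q.val.2.1 ∧
          (p.val.2.2 = q.val.2.2 + 1 ∨ q.val.2.2 = p.val.2.2 + 1)
      · rw [if_pos h, if_pos ⟨h.1.symm, h.2.1.symm, h.2.2.symm⟩, h.1, h.2.1]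
      · rw [if_neg h, if_neg fun h' => h ⟨h'.1.symm, h'.2.1.symm, h'.2.2.symm⟩]
  · -- values in (0,1]
    intro p q hpq
    rcases p with x | p <;> rcases q with y | q
    · simp only [mw] at hpq; exact absurd hpq (lt_irrefl 0)
    · simp only [mw] at hpq
      simp only [mσ]
      split_ifs at hpq ⊢ with h
      · exact hσ_bound _ _ q.2.2.1
      · exact absurd hpq (lt_irrefl 0)
    · simp only [mw] at hpq
      simp only [mσ]
      split_ifs at hpq ⊢ with h
      · exact hσ_bound _ _ p.2.2.1
      · exact absurd hpq (lt_irrefl 0)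
    · simp only [mw] at hpq
      simp only [mσ]
      split_ifs at hpq ⊢ with h
      · exact hσ_bound _ _ p.2.2.1
      · exact absurd hpq (lt_irrefl 0)
  · -- adaptedness
    intro P
    rcases P with x | ⟨⟨a, b, i⟩, hE, hw, hi1, hi2⟩
    · -- old vertex
      set f : MV wo n Ep → ℝ := fun q =>
        mw wo n Ep (Sum.inl x) q * mσ wo σo n Ep (Sum.inl x) q ^ 2 with hf
      set g : Vo → ℝ := fun y => wo x y * σo x y ^ 2 with hg
      set φ : MV wo n Ep → Vo :=
        Sum.elim id (fun r => if x = r.val.1 then r.val.2.1 else r.val.1) with hφ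
      have hg_nonneg : ∀ y, 0 ≤ g y := fun y =>
        mul_nonneg (hwo_nonneg x y) (sq_nonneg _)
      have hg_zero : ∀ y ∉ (hloc x).toFinset, g y = 0 := by
        intro y hy
        have h1 : ¬ 0 < wo x y := by simpa [Set.Finite.mem_toFinset] using hy
        have h2 : wo x y = 0 := le_antisymm (not_lt.1 h1) (hwo_nonneg x y)
        simp [hg, h2]
      have hg_sum : Summable g := summable_of_ne_finset_zero hg_zero
      have hf_inl : ∀ y, f (Sum.inl y) = 0 := by
        intro y; simp [hf, mw]
      have hkey : ∀ q : NewV wo n Ep, f (Sum.inr q) ≠ 0 →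
          ((x = q.val.1 ∧ q.val.2.2 = 1) ∨
            (x = q.val.2.1 ∧ q.val.2.2 = n q.val.1 q.val.2.1 - 1)) := by
        intro q hq
        by_contra hC
        exact hq (by simp [hf, mw, mσ, hC])
      have hf_le : ∀ q, f q ≤ g (φ q) := by
        intro q
        rcases q with y | q
        · simpa [hf_inl, hφ] using hg_nonneg y
        by_cases hC : (x = q.val.1 ∧ q.val.2.2 = 1) ∨
            (x = q.val.2.1 ∧ q.val.2.2 = n q.val.1 q.val.2.1 - 1)
        · obtain ⟨hE, hw, hi1, hi2⟩ := q.2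
          have hab : q.val.1 ≠ q.val.2.1 := hne _ _ hw
          have hNR : (2 : ℝ) ≤ (n q.val.1 q.val.2.1 : ℝ) := by exact_mod_cast hn2 _ _ hw
          have hN0 : (n q.val.1 q.val.2.1 : ℝ) ≠ 0 := by linarith
          have hval : f (Sum.inr q) =
              wo q.val.1 q.val.2.1 * σo q.val.1 q.val.2.1 ^ 2
                / (n q.val.1 q.val.2.1 : ℝ) := by
            simp only [hf, mw, mσ, if_pos hC]
            field_simp
          have hle : f (Sum.inr q) ≤
              wo q.val.1 q.val.2.1 * σo q.val.1 q.val.2.1 ^ 2 := by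
            rw [hval]
            exact div_le_self (mul_nonneg (hwo_nonneg _ _) (sq_nonneg _)) (by linarith)
          rcases hC with ⟨hx, hi⟩ | ⟨hx, hi⟩
          · have hφq : φ (Sum.inr q) = q.val.2.1 := by simp [hφ, if_pos hx]
            rw [hφq, hg]
            calc f (Sum.inr q) ≤ wo q.val.1 q.val.2.1 * σo q.val.1 q.val.2.1 ^ 2 := hle
              _ = wo x q.val.2.1 * σo x q.val.2.1 ^ 2 := by rw [← hx]
          · have hxa : ¬ (x = q.val.1) := by rw [hx]; exact fun h => hab h.symm
            have hφq : φ (Sum.inr q) = q.val.1 := by simp [hφ, if_neg hxa]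
            rw [hφq, hg]
            calc f (Sum.inr q) ≤ wo q.val.1 q.val.2.1 * σo q.val.1 q.val.2.1 ^ 2 := hle
              _ = wo x q.val.1 * σo x q.val.1 ^ 2 := by
                  rw [hx, hwo_symm q.val.1 q.val.2.1, hσo_symm q.val.1 q.val.2.1]
        · have : f (Sum.inr q) = 0 := by simp [hf, mw, mσ, hC]
          rw [this]; exact hg_nonneg _
      have himg : φ '' (Function.support f) ⊆ {y | 0 < wo x y} := by
        rintro y ⟨q, hq, rfl⟩
        rcases q with y' | q
        · exact absurd (hf_inl y') hq
        have hc := hkey q hq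
        obtain ⟨hE, hw, hi1, hi2⟩ := q.2
        have hab : q.val.1 ≠ q.val.2.1 := hne _ _ hw
        rcases hc with ⟨hx, hi⟩ | ⟨hx, hi⟩
        · have hφq : φ (Sum.inr q) = q.val.2.1 := by simp [hφ, if_pos hx]
          rw [Set.mem_setOf_eq, hφq, hx]
          exact hw
        · have hxa : ¬ (x = q.val.1) := by rw [hx]; exact fun h => hab h.symm
          have hφq : φ (Sum.inr q) = q.val.1 := by simp [hφ, if_neg hxa]
          rw [Set.mem_setOf_eq, hφq, hx, hwo_symm]
          exact hw
      have hinj : Set.InjOn φ (Function.support f) := by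
        rintro p hp p' hp' hpp'
        rcases p with y | q
        · exact absurd (hf_inl y) hp
        rcases p' with y' | q'
        · exact absurd (hf_inl y') hp'
        have hc := hkey q hp
        have hc' := hkey q' hp'
        obtain ⟨hEq, hwq, -, -⟩ := q.2
        obtain ⟨hEq', hwq', -, -⟩ := q'.2
        have hab : q.val.1 ≠ q.val.2.1 := hne _ _ hwq
        have hab' : q'.val.1 ≠ q'.val.2.1 := hne _ _ hwq'
        rcases hc with ⟨hx, hi⟩ | ⟨hx, hi⟩ <;> rcases hc' with ⟨hx', hi'⟩ | ⟨hx', hi'⟩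
        · have e1 : φ (Sum.inr q) = q.val.2.1 := by simp [hφ, if_pos hx]
          have e2 : φ (Sum.inr q') = q'.val.2.1 := by simp [hφ, if_pos hx']
          have h1 : q.val.1 = q'.val.1 := hx.symm.trans hx'
          have h2 : q.val.2.1 = q'.val.2.1 := by rw [← e1, ← e2, hpp']
          have h3 : q.val.2.2 = q'.val.2.2 := hi.trans hi'.symm
          exact congrArg Sum.inr (Subtype.ext (by
            rw [Prod.ext_iff, Prod.ext_iff]; exact ⟨h1, h2, h3⟩))
        · have hxa' : ¬ (x = q'.val.1) := by rw [hx']; exact fun h => hab' h.symm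
          have e1 : φ (Sum.inr q) = q.val.2.1 := by simp [hφ, if_pos hx]
          have e2 : φ (Sum.inr q') = q'.val.1 := by simp [hφ, if_neg hxa']
          have hy : q.val.2.1 = q'.val.1 := by rw [← e1, ← e2, hpp']
          exfalso
          apply hnot_both q.val.1 q.val.2.1 hwq hEq
          have : (q'.val.1, q'.val.2.1) = (q.val.2.1, q.val.1) := by
            rw [← hy, ← hx', ← hx]
          rw [← this]; exact hEq'
        · have hxa : ¬ (x = q.val.1) := by rw [hx]; exact fun h => hab h.symm
          have e1 : φ (Sum.inr q) = q.val.1 := by simp [hφ, if_neg hxa]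
          have e2 : φ (Sum.inr q') = q'.val.2.1 := by simp [hφ, if_pos hx']
          have hy : q.val.1 = q'.val.2.1 := by rw [← e1, ← e2, hpp']
          exfalso
          apply hnot_both q.val.1 q.val.2.1 hwq hEq
          have : (q'.val.1, q'.val.2.1) = (q.val.2.1, q.val.1) := by
            rw [← hx', ← hx, hy]
          rw [← this]; exact hEq'
        · have hxa : ¬ (x = q.val.1) := by rw [hx]; exact fun h => hab h.symm
          have hxa' : ¬ (x = q'.val.1) := by rw [hx']; exact fun h => hab' h.symm
          have e1 : φ (Sum.inr q) = q.val.1 := by simp [hφ, if_neg hxa]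
          have e2 : φ (Sum.inr q') = q'.val.1 := by simp [hφ, if_neg hxa']
          have h1 : q.val.1 = q'.val.1 := by rw [← e1, ← e2, hpp']
          have h2 : q.val.2.1 = q'.val.2.1 := hx.symm.trans hx'
          have h3 : q.val.2.2 = q'.val.2.2 := by rw [hi, hi', h1, h2]
          exact congrArg Sum.inr (Subtype.ext (by
            rw [Prod.ext_iff, Prod.ext_iff]; exact ⟨h1, h2, h3⟩))
      have hsupp : (Function.support f).Finite :=
        Set.Finite.of_finite_image ((hloc x).subset himg) hinj
      have h0 : ∀ q ∉ hsupp.toFinset, f q = 0 := by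
        intro q hq
        by_contra h
        exact hq (hsupp.mem_toFinset.2 h)
      calc ∑' q, f q = ∑ q ∈ hsupp.toFinset, f q := tsum_eq_sum h0
        _ ≤ ∑ q ∈ hsupp.toFinset, g (φ q) := Finset.sum_le_sum fun q _ => hf_le q
        _ = ∑ y ∈ hsupp.toFinset.image φ, g y := by
            refine (Finset.sum_image ?_).symm
            intro p hp q hq h
            exact hinj (hsupp.mem_toFinset.1 hp) (hsupp.mem_toFinset.1 hq) h
        _ ≤ ∑' y, g y := Summable.sum_le_tsum _ (fun y _ => hg_nonneg y) hg_sum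
        _ ≤ μo x := hadapt x
    · -- new vertex
      have hi1' : 1 ≤ i := hi1
      have hi2' : i ≤ n a b - 1 := hi2
      have hab : a ≠ b := hne a b hw
      have hNR : (2 : ℝ) ≤ (n a b : ℝ) := by exact_mod_cast hn2 a b hw
      have hN0 : (n a b : ℝ) ≠ 0 := by linarith
      have hN2 : 2 ≤ n a b := hn2 a b hw
      set t : ℝ := wo a b * σo a b ^ 2 / (n a b : ℝ) with ht
      have ht0 : 0 ≤ t :=
        div_nonneg (mul_nonneg (hwo_nonneg a b) (sq_nonneg _)) (by linarith)
      set f : MV wo n Ep → ℝ := fun q =>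
        mw wo n Ep (Sum.inr ⟨(a, b, i), ⟨hE, hw, hi1, hi2⟩⟩) q *
          mσ wo σo n Ep (Sum.inr ⟨(a, b, i), ⟨hE, hw, hi1, hi2⟩⟩) q ^ 2 with hf
      have hf_le : ∀ q, f q ≤ t := by
        intro q
        rcases q with y | q
        · simp only [hf, mw, mσ]
          split_ifs with h
          · refine le_of_eq ?_
            rw [ht]; field_simp
          · simpa using ht0
        · simp only [hf, mw, mσ]
          split_ifs with h
          · refine le_of_eq ?_
            rw [ht]; field_simp
          · simpa using ht0
      have main : ∀ u v : MV wo n Ep, (∀ q, f q ≠ 0 → q = u ∨ q = v) →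
          ∑' q, f q ≤ 2 * wo a b * σo a b ^ 2 / (n a b : ℝ) := by
        intro u v hclass
        have hz : ∀ q ∉ ({u, v} : Finset (MV wo n Ep)), f q = 0 := by
          intro q hq
          by_contra h
          rcases hclass q h with rfl | rfl
          · exact hq (Finset.mem_insert_self _ _)
          · exact hq (Finset.mem_insert_of_mem (Finset.mem_singleton_self _))
        have hcard : (({u, v} : Finset (MV wo n Ep)).card : ℝ) ≤ 2 := by
          have := Finset.card_insert_le u ({v} : Finset (MV wo n Ep))
          have h2 : ({u, v} : Finset (MV wo n Ep)).card ≤ 2 := by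
            simpa using this
          exact_mod_cast h2
        calc ∑' q, f q = ∑ q ∈ ({u, v} : Finset (MV wo n Ep)), f q := tsum_eq_sum hz
          _ ≤ ({u, v} : Finset (MV wo n Ep)).card • t :=
              Finset.sum_le_card_nsmul _ _ _ fun q _ => hf_le q
          _ = (({u, v} : Finset (MV wo n Ep)).card : ℝ) * t := nsmul_eq_mul _ _
          _ ≤ 2 * t := mul_le_mul_of_nonneg_right hcard ht0
          _ = 2 * wo a b * σo a b ^ 2 / (n a b : ℝ) := by rw [ht]; ring
      have hμ : mμ wo σo μo n Ep (Sum.inr ⟨(a, b, i), ⟨hE, hw, hi1, hi2⟩⟩) =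
          2 * wo a b * σo a b ^ 2 / (n a b : ℝ) := rfl
      rw [hμ]
      -- classify the neighbours
      have hkeyl : ∀ y : Vo, f (Sum.inl y) ≠ 0 →
          ((y = a ∧ i = 1) ∨ (y = b ∧ i = n a b - 1)) := by
        intro y hy
        by_contra hC
        exact hy (by simp [hf, mw, mσ, hC])
      have hkeyr : ∀ q : NewV wo n Ep, f (Sum.inr q) ≠ 0 →
          (a = q.val.1 ∧ b = q.val.2.1 ∧
            (i = q.val.2.2 + 1 ∨ q.val.2.2 = i + 1)) := by
        intro q hq
        by_contra hC
        exact hq (by simp [hf, mw, mσ, hC])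
      by_cases hup : i + 1 ≤ n a b - 1 <;> by_cases hdown : 2 ≤ i
      · -- interior: both inr neighbours
        refine main (Sum.inr ⟨(a, b, i + 1), ⟨hE, hw, (by omega : 1 ≤ i + 1), hup⟩⟩)
          (Sum.inr ⟨(a, b, i - 1),
            ⟨hE, hw, (by omega : 1 ≤ i - 1), (by omega : i - 1 ≤ n a b - 1)⟩⟩) ?_
        intro q hq
        rcases q with y | q
        · rcases hkeyl y hq with ⟨rfl, hi⟩ | ⟨rfl, hi⟩ <;> omega
        · obtain ⟨h1, h2, h3⟩ := hkeyr q hq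
          have ha' : a = q.val.1 := h1
          have hb' : b = q.val.2.1 := h2
          have hq1 : 1 ≤ q.val.2.2 := q.2.2.2.1
          have hq2 : q.val.2.2 ≤ n a b - 1 := by rw [ha', hb']; exact q.2.2.2.2
          rcases h3 with h3 | h3
          · right
            refine congrArg Sum.inr (Subtype.ext ?_)
            rw [Prod.ext_iff, Prod.ext_iff]
            exact ⟨h1.symm, h2.symm, (by omega : q.val.2.2 = i - 1)⟩
          · left
            refine congrArg Sum.inr (Subtype.ext ?_)
            rw [Prod.ext_iff, Prod.ext_iff]
            exact ⟨h1.symm, h2.symm, (h3 : q.val.2.2 = i + 1)⟩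
      · -- i = 1, up neighbour inr, down neighbour is a
        refine main (Sum.inr ⟨(a, b, i + 1), ⟨hE, hw, (by omega : 1 ≤ i + 1), hup⟩⟩)
          (Sum.inl a) ?_
        intro q hq
        rcases q with y | q
        · rcases hkeyl y hq with ⟨rfl, hi⟩ | ⟨rfl, hi⟩
          · right; rfl
          · omega
        · obtain ⟨h1, h2, h3⟩ := hkeyr q hq
          have ha' : a = q.val.1 := h1
          have hb' : b = q.val.2.1 := h2
          have hq1 : 1 ≤ q.val.2.2 := q.2.2.2.1
          have hq2 : q.val.2.2 ≤ n a b - 1 := by rw [ha', hb']; exact q.2.2.2.2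
          rcases h3 with h3 | h3
          · omega
          · left
            refine congrArg Sum.inr (Subtype.ext ?_)
            rw [Prod.ext_iff, Prod.ext_iff]
            exact ⟨h1.symm, h2.symm, (h3 : q.val.2.2 = i + 1)⟩
      · -- i = n - 1, up neighbour is b, down neighbour inr
        refine main (Sum.inl b)
          (Sum.inr ⟨(a, b, i - 1),
            ⟨hE, hw, (by omega : 1 ≤ i - 1), (by omega : i - 1 ≤ n a b - 1)⟩⟩) ?_
        intro q hq
        rcases q with y | q
        · rcases hkeyl y hq with ⟨rfl, hi⟩ | ⟨rfl, hi⟩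
          · omega
          · left; rfl
        · obtain ⟨h1, h2, h3⟩ := hkeyr q hq
          have ha' : a = q.val.1 := h1
          have hb' : b = q.val.2.1 := h2
          have hq1 : 1 ≤ q.val.2.2 := q.2.2.2.1
          have hq2 : q.val.2.2 ≤ n a b - 1 := by rw [ha', hb']; exact q.2.2.2.2
          rcases h3 with h3 | h3
          · right
            refine congrArg Sum.inr (Subtype.ext ?_)
            rw [Prod.ext_iff, Prod.ext_iff]
            exact ⟨h1.symm, h2.symm, (by omega : q.val.2.2 = i - 1)⟩
          · omega
      · -- n = 2, i = 1: both neighbours are old vertices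
        refine main (Sum.inl b) (Sum.inl a) ?_
        intro q hq
        rcases q with y | q
        · rcases hkeyl y hq with ⟨rfl, hi⟩ | ⟨rfl, hi⟩
          · right; rfl
          · left; rfl
        · obtain ⟨h1, h2, h3⟩ := hkeyr q hq
          have ha' : a = q.val.1 := h1
          have hb' : b = q.val.2.1 := h2
          have hq1 : 1 ≤ q.val.2.2 := q.2.2.2.1
          have hq2 : q.val.2.2 ≤ n a b - 1 := by rw [ha', hb']; exact q.2.2.2.2
          omega
end

section
/- With the modification construction as above, the adapted path metric d_σ of the modified graph restricted to V_o × V_o equals the adapted path metric d_{σ_o} of the original graph: d_σ(x,y) = d_{σ_o}(x,y) for all x, y ∈ V_o. -/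
/-- The sum of `σ`-weights along consecutive pairs of a list of vertices. -/
def chainSum {V : Type*} (σ : V → V → ℝ) : List V → ℝ
  | a :: b :: l => σ a b + chainSum σ (b :: l)
  | _ => 0

/-- `l` is a path from `x` to `y` in the graph whose edges are the pairs of
positive weight. -/
def isPath {V : Type*} (w : V → V → ℝ) (x y : V) (l : List V) : Prop :=
  l.head? = some x ∧ l.getLast? = some y ∧ l.Chain' (fun a b => 0 < w a b)

/-- The adapted path (pseudo-)metric: the infimum of `σ`-lengths of paths from
`x` to `y`. -/
noncomputable def dPath {V : Type*} (w σ : V → V → ℝ) (x y : V) : ℝ :=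
  sInf {s : ℝ | ∃ l : List V, isPath w x y l ∧ s = chainSum σ l}

section ListAux

variable {V : Type*}

lemma chainSum_cons_cons (σ : V → V → ℝ) (a b : V) (l : List V) :
    chainSum σ (a :: b :: l) = σ a b + chainSum σ (b :: l) := by simp [chainSum]

lemma chainSum_nonneg (σ : V → V → ℝ) (R : V → V → Prop)
    (h : ∀ a b, R a b → 0 ≤ σ a b) :
    ∀ l : List V, l.Chain' R → 0 ≤ chainSum σ l
  | [] , _ => le_refl 0
  | [_], _ => le_refl 0
  | a :: b :: l, hc => by
      simp only [List.Chain'] at hc; rw [List.isChain_cons_cons] at hc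
      have := chainSum_nonneg σ R h (b :: l) hc.2
      rw [chainSum_cons_cons]
      exact add_nonneg (h a b hc.1) this

lemma chainSum_append (σ : V → V → ℝ) :
    ∀ (A : List V) (B : List V) (v : V), A.getLast? = some v →
      chainSum σ (A ++ B) = chainSum σ A + chainSum σ (v :: B)
  | [], B, v, h => by simp at h
  | [a], B, v, h => by
      simp at h; subst h
      cases B with
      | nil => simp [chainSum]
      | cons b B' => simp [chainSum_cons_cons, chainSum]
  | a :: a' :: A', B, v, h => by
      rw [List.getLast?_cons_cons] at h
      have ih := chainSum_append σ (a' :: A') B v h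
      simp only [List.cons_append] at *
      rw [chainSum_cons_cons, chainSum_cons_cons, ih]
      ring

lemma chainSum_reverse (σ : V → V → ℝ) (hσ : ∀ a b, σ a b = σ b a) :
    ∀ l : List V, chainSum σ l.reverse = chainSum σ l
  | [] => rfl
  | [a] => rfl
  | a :: b :: l => by
      have ih := chainSum_reverse σ hσ (b :: l)
      have hrev : (a :: b :: l).reverse = (b :: l).reverse ++ [a] := by simp
      have hlast : (b :: l).reverse.getLast? = some b := by
        rw [List.getLast?_reverse]; rfl
      rw [hrev, chainSum_append σ _ _ _ hlast, ih, chainSum_cons_cons,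
        chainSum_cons_cons]
      simp [chainSum, hσ b a]
      ring

lemma isPath_reverse (w : V → V → ℝ) (hw : ∀ a b, w a b = w b a)
    {x y : V} {l : List V} (h : isPath w x y l) : isPath w y x l.reverse := by
  obtain ⟨h1, h2, h3⟩ := h
  refine ⟨?_, ?_, ?_⟩
  · rw [List.head?_reverse]; exact h2
  · rw [List.getLast?_reverse]; exact h1
  · simp only [List.Chain']; rw [List.isChain_reverse]
    exact h3.imp (fun a b hab => by show 0 < w b a; rw [hw b a]; exact hab)

lemma isPath_glue (w σ : V → V → ℝ) {x v y : V} {L1 L2 : List V}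
    (h1 : isPath w x v L1) (h2 : isPath w v y L2) :
    isPath w x y (L1 ++ L2.tail) ∧
      chainSum σ (L1 ++ L2.tail) = chainSum σ L1 + chainSum σ L2 := by
  obtain ⟨h1h, h1l, h1c⟩ := h1
  obtain ⟨h2h, h2l, h2c⟩ := h2
  obtain ⟨t, rfl⟩ : ∃ t, L2 = v :: t := by
    cases L2 with
    | nil => simp at h2h
    | cons b B => simp at h2h; exact ⟨B, by rw [h2h]⟩
  simp only [List.tail_cons]
  simp only [List.Chain'] at h2c; rw [List.isChain_cons] at h2c
  constructor
  · refine ⟨?_, ?_, ?_⟩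
    · cases L1 with
      | nil => simp at h1h
      | cons a A => simpa using h1h
    · cases t with
      | nil =>
        simp only [List.getLast?_singleton] at h2l
        rw [List.append_nil, h1l, h2l]
      | cons c t' =>
        rw [List.getLast?_append]
        rw [List.getLast?_cons_cons] at h2l
        rw [h2l]; rfl
    · simp only [List.Chain']; rw [List.isChain_append]
      exact ⟨h1c, h2c.2, fun a ha b hb => by
        rw [h1l] at ha; simp at ha; subst ha; exact h2c.1 b hb⟩
  · rw [chainSum_append σ L1 t v h1l]

end ListAux

section EdgeAux

variable {Vo : Type*} {wo σo : Vo → Vo → ℝ} {n : Vo → Vo → ℕ} {Ep : Set (Vo × Vo)}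

lemma mw_inl_inl (x y : Vo) : mw wo n Ep (Sum.inl x) (Sum.inl y) = 0 := rfl

lemma mw_inl_inr_pos {x : Vo} {p : NewV wo n Ep}
    (h : 0 < mw wo n Ep (Sum.inl x) (Sum.inr p)) :
    (x = p.val.1 ∧ p.val.2.2 = 1) ∨
      (x = p.val.2.1 ∧ p.val.2.2 = n p.val.1 p.val.2.1 - 1) := by
  by_contra hc
  simp only [mw] at h
  rw [if_neg hc] at h
  exact lt_irrefl 0 h

lemma mw_inr_inl_pos {x : Vo} {p : NewV wo n Ep}
    (h : 0 < mw wo n Ep (Sum.inr p) (Sum.inl x)) :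
    (x = p.val.1 ∧ p.val.2.2 = 1) ∨
      (x = p.val.2.1 ∧ p.val.2.2 = n p.val.1 p.val.2.1 - 1) := by
  by_contra hc
  simp only [mw] at h
  rw [if_neg hc] at h
  exact lt_irrefl 0 h

lemma mw_inr_inr_pos {p q : NewV wo n Ep}
    (h : 0 < mw wo n Ep (Sum.inr p) (Sum.inr q)) :
    p.val.1 = q.val.1 ∧ p.val.2.1 = q.val.2.1 ∧
      (p.val.2.2 = q.val.2.2 + 1 ∨ q.val.2.2 = p.val.2.2 + 1) := by
  by_contra hc
  simp only [mw] at h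
  rw [if_neg hc] at h
  exact lt_irrefl 0 h

lemma mσ_inl_inr {x : Vo} {p : NewV wo n Ep}
    (h : (x = p.val.1 ∧ p.val.2.2 = 1) ∨
      (x = p.val.2.1 ∧ p.val.2.2 = n p.val.1 p.val.2.1 - 1)) :
    mσ wo σo n Ep (Sum.inl x) (Sum.inr p)
      = σo p.val.1 p.val.2.1 / (n p.val.1 p.val.2.1 : ℝ) := by
  simp only [mσ]; rw [if_pos h]

lemma mσ_inr_inl {x : Vo} {p : NewV wo n Ep}
    (h : (x = p.val.1 ∧ p.val.2.2 = 1) ∨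
      (x = p.val.2.1 ∧ p.val.2.2 = n p.val.1 p.val.2.1 - 1)) :
    mσ wo σo n Ep (Sum.inr p) (Sum.inl x)
      = σo p.val.1 p.val.2.1 / (n p.val.1 p.val.2.1 : ℝ) := by
  simp only [mσ]; rw [if_pos h]

lemma mσ_inr_inr {p q : NewV wo n Ep}
    (h : p.val.1 = q.val.1 ∧ p.val.2.1 = q.val.2.1 ∧
      (p.val.2.2 = q.val.2.2 + 1 ∨ q.val.2.2 = p.val.2.2 + 1)) :
    mσ wo σo n Ep (Sum.inr p) (Sum.inr q)
      = σo p.val.1 p.val.2.1 / (n p.val.1 p.val.2.1 : ℝ) := by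
  simp only [mσ]; rw [if_pos h]

lemma mw_inl_inr_of {x : Vo} {p : NewV wo n Ep}
    (h : (x = p.val.1 ∧ p.val.2.2 = 1) ∨
      (x = p.val.2.1 ∧ p.val.2.2 = n p.val.1 p.val.2.1 - 1)) :
    0 < mw wo n Ep (Sum.inl x) (Sum.inr p) := by
  simp only [mw]; rw [if_pos h]
  have hn2 : 2 ≤ n p.val.1 p.val.2.1 := by
    have := p.property.2.2; omega
  have := p.property.2.1
  positivity

lemma mw_inr_inl_of {x : Vo} {p : NewV wo n Ep}
    (h : (x = p.val.1 ∧ p.val.2.2 = 1) ∨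
      (x = p.val.2.1 ∧ p.val.2.2 = n p.val.1 p.val.2.1 - 1)) :
    0 < mw wo n Ep (Sum.inr p) (Sum.inl x) := by
  simp only [mw]; rw [if_pos h]
  have hn2 : 2 ≤ n p.val.1 p.val.2.1 := by
    have := p.property.2.2; omega
  have := p.property.2.1
  positivity

lemma mw_inr_inr_of {p q : NewV wo n Ep}
    (h : p.val.1 = q.val.1 ∧ p.val.2.1 = q.val.2.1 ∧
      (p.val.2.2 = q.val.2.2 + 1 ∨ q.val.2.2 = p.val.2.2 + 1)) :
    0 < mw wo n Ep (Sum.inr p) (Sum.inr q) := by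
  simp only [mw]; rw [if_pos h]
  have hn2 : 2 ≤ n p.val.1 p.val.2.1 := by
    have := p.property.2.2; omega
  have := p.property.2.1
  positivity

lemma mw_symm (X Y : MV wo n Ep) : mw wo n Ep X Y = mw wo n Ep Y X := by
  cases X with
  | inl x =>
    cases Y with
    | inl y => rfl
    | inr p => simp only [mw]
  | inr p =>
    cases Y with
    | inl y => simp only [mw]
    | inr q =>
      simp only [mw]
      split_ifs with h1 h2 h2
      · rw [h1.1, h1.2.1]
      · exact absurd ⟨h1.1.symm, h1.2.1.symm, h1.2.2.symm⟩ h2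
      · exact absurd ⟨h2.1.symm, h2.2.1.symm, h2.2.2.symm⟩ h1
      · rfl

lemma mσ_symm (X Y : MV wo n Ep) : mσ wo σo n Ep X Y = mσ wo σo n Ep Y X := by
  cases X with
  | inl x =>
    cases Y with
    | inl y => rfl
    | inr p => simp only [mσ]
  | inr p =>
    cases Y with
    | inl y => simp only [mσ]
    | inr q =>
      simp only [mσ]
      split_ifs with h1 h2 h2
      · rw [h1.1, h1.2.1]
      · exact absurd ⟨h1.1.symm, h1.2.1.symm, h1.2.2.symm⟩ h2
      · exact absurd ⟨h2.1.symm, h2.2.1.symm, h2.2.2.symm⟩ h1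
      · rfl

end EdgeAux

section Seg

variable {Vo : Type*} {wo σo : Vo → Vo → ℝ} {n : Vo → Vo → ℕ} {Ep : Set (Vo × Vo)}

lemma seg_aux (a b : Vo) (hEp : (a, b) ∈ Ep) (hw : 0 < wo a b) (hn : 2 ≤ n a b) :
    ∀ d : ℕ, ∀ (h1 : 1 ≤ d) (h2 : d ≤ n a b - 1),
      ∃ T : List (MV wo n Ep),
        T.head? = some (Sum.inr ⟨(a, b, n a b - d), hEp, hw, by show 1 ≤ n a b - d; omega, by show n a b - d ≤ n a b - 1; omega⟩) ∧
        T.getLast? = some (Sum.inl b) ∧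
        T.Chain' (fun X Y => 0 < mw wo n Ep X Y) ∧
        chainSum (mσ wo σo n Ep) T = d * (σo a b / (n a b : ℝ)) := by
  intro d
  induction d with
  | zero => intro h1; omega
  | succ d ih =>
    intro h1 h2
    by_cases hd : d = 0
    · subst hd
      refine ⟨[Sum.inr ⟨(a, b, n a b - 1), hEp, hw, by show 1 ≤ n a b - 1; omega, by show n a b - 1 ≤ n a b - 1; omega⟩, Sum.inl b],
        rfl, rfl, ?_, ?_⟩
      · simp only [List.Chain']; rw [List.isChain_cons_cons]
        refine ⟨mw_inr_inl_of (Or.inr ⟨rfl, rfl⟩), List.isChain_singleton _⟩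
      · rw [chainSum_cons_cons]
        have := mσ_inr_inl (wo := wo) (σo := σo) (n := n) (Ep := Ep)
          (p := ⟨(a, b, n a b - 1), hEp, hw, by show 1 ≤ n a b - 1; omega, by show n a b - 1 ≤ n a b - 1; omega⟩)
          (x := b) (Or.inr ⟨rfl, rfl⟩)
        rw [this]
        simp [chainSum]
    · obtain ⟨T, hTh, hTl, hTc, hTs⟩ := ih (by omega) (by omega)
      set p : NewV wo n Ep := ⟨(a, b, n a b - (d + 1)), hEp, hw, by show 1 ≤ n a b - (d + 1); omega, by show n a b - (d + 1) ≤ n a b - 1; omega⟩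
      set q : NewV wo n Ep := ⟨(a, b, n a b - d), hEp, hw, by show 1 ≤ n a b - d; omega, by show n a b - d ≤ n a b - 1; omega⟩
      have hpq : p.val.1 = q.val.1 ∧ p.val.2.1 = q.val.2.1 ∧
          (p.val.2.2 = q.val.2.2 + 1 ∨ q.val.2.2 = p.val.2.2 + 1) := by
        refine ⟨rfl, rfl, Or.inr ?_⟩
        show n a b - d = n a b - (d + 1) + 1
        omega
      obtain ⟨T', rfl⟩ : ∃ T', T = Sum.inr q :: T' := by
        cases T with
        | nil => simp at hTh
        | cons c T' => simp at hTh; exact ⟨T', by rw [hTh]⟩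
      refine ⟨Sum.inr p :: Sum.inr q :: T', rfl, ?_, ?_, ?_⟩
      · rw [List.getLast?_cons_cons]; exact hTl
      · simp only [List.Chain']; rw [List.isChain_cons_cons]
        exact ⟨mw_inr_inr_of hpq, hTc⟩
      · rw [chainSum_cons_cons, hTs, mσ_inr_inr hpq]
        push_cast
        ring

lemma seg_oriented (a b : Vo) (hEp : (a, b) ∈ Ep) (hw : 0 < wo a b)
    (hn : 2 ≤ n a b) :
    ∃ L : List (MV wo n Ep),
      isPath (mw wo n Ep) (Sum.inl a) (Sum.inl b) L ∧
      chainSum (mσ wo σo n Ep) L = σo a b := by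
  obtain ⟨T, hTh, hTl, hTc, hTs⟩ := seg_aux (σo := σo) a b hEp hw hn (n a b - 1)
    (by omega) le_rfl
  set p : NewV wo n Ep := ⟨(a, b, n a b - (n a b - 1)), hEp, hw, by show 1 ≤ n a b - (n a b - 1); omega, by show n a b - (n a b - 1) ≤ n a b - 1; omega⟩
  obtain ⟨T', rfl⟩ : ∃ T', T = Sum.inr p :: T' := by
    cases T with
    | nil => simp at hTh
    | cons c T'' => simp at hTh; exact ⟨T'', by rw [hTh]⟩
  have hcond : (a = p.val.1 ∧ p.val.2.2 = 1) ∨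
      (a = p.val.2.1 ∧ p.val.2.2 = n p.val.1 p.val.2.1 - 1) := by
    refine Or.inl ⟨rfl, ?_⟩
    show n a b - (n a b - 1) = 1
    omega
  refine ⟨Sum.inl a :: Sum.inr p :: T', ⟨rfl, ?_, ?_⟩, ?_⟩
  · rw [List.getLast?_cons_cons]; exact hTl
  · simp only [List.Chain']; rw [List.isChain_cons_cons]
    exact ⟨mw_inl_inr_of hcond, hTc⟩
  · rw [chainSum_cons_cons, hTs, mσ_inl_inr hcond]
    have hn0 : (n a b : ℝ) ≠ 0 := by positivity
    have : ((n a b - 1 : ℕ) : ℝ) = (n a b : ℝ) - 1 := by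
      push_cast [Nat.cast_sub (by omega : 1 ≤ n a b)]; ring
    rw [this]
    change σo a b / (n a b : ℝ) + ((n a b : ℝ) - 1) * (σo a b / (n a b : ℝ)) = σo a b
    field_simp
    ring

lemma seg (hwo_symm : ∀ x y, wo x y = wo y x) (hσo_symm : ∀ x y, σo x y = σo y x)
    (hn2 : ∀ x y, 0 < wo x y → 2 ≤ n x y)
    (hEp_orient : ∀ x y, 0 < wo x y → Xor' ((x, y) ∈ Ep) ((y, x) ∈ Ep))
    (a b : Vo) (hw : 0 < wo a b) :
    ∃ L : List (MV wo n Ep),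
      isPath (mw wo n Ep) (Sum.inl a) (Sum.inl b) L ∧
      chainSum (mσ wo σo n Ep) L = σo a b := by
  rcases hEp_orient a b hw with ⟨hEp, -⟩ | ⟨hEp, -⟩
  · exact seg_oriented a b hEp hw (hn2 a b hw)
  · have hw' : 0 < wo b a := by rw [hwo_symm b a]; exact hw
    obtain ⟨L, hL, hLs⟩ := seg_oriented (σo := σo) b a hEp hw' (hn2 b a hw')
    refine ⟨L.reverse, isPath_reverse _ mw_symm hL, ?_⟩
    rw [chainSum_reverse _ mσ_symm, hLs, hσo_symm]

lemma lift (hwo_symm : ∀ x y, wo x y = wo y x) (hσo_symm : ∀ x y, σo x y = σo y x)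
    (hn2 : ∀ x y, 0 < wo x y → 2 ≤ n x y)
    (hEp_orient : ∀ x y, 0 < wo x y → Xor' ((x, y) ∈ Ep) ((y, x) ∈ Ep)) :
    ∀ (l : List Vo) (x y : Vo), isPath wo x y l →
      ∃ L : List (MV wo n Ep),
        isPath (mw wo n Ep) (Sum.inl x) (Sum.inl y) L ∧
        chainSum (mσ wo σo n Ep) L = chainSum σo l
  | [], x, y, h => by simp [isPath] at h
  | [a], x, y, h => by
      obtain ⟨h1, h2, -⟩ := h
      simp at h1 h2; subst h1; subst h2
      exact ⟨[Sum.inl a], ⟨rfl, rfl, List.isChain_singleton _⟩, rfl⟩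
  | a :: v :: rest, x, y, h => by
      obtain ⟨h1, h2, h3⟩ := h
      have hx : a = x := by simpa using h1
      subst hx
      rw [List.getLast?_cons_cons] at h2
      simp only [List.Chain'] at h3; rw [List.isChain_cons_cons] at h3
      have hpath2 : isPath wo v y (v :: rest) := ⟨rfl, h2, h3.2⟩
      obtain ⟨L2, hL2, hL2s⟩ := lift hwo_symm hσo_symm hn2 hEp_orient (v :: rest) v y hpath2
      obtain ⟨L1, hL1, hL1s⟩ := seg (σo := σo) hwo_symm hσo_symm hn2 hEp_orient a v h3.1
      obtain ⟨hglue, hsum⟩ := isPath_glue (mw wo n Ep) (mσ wo σo n Ep) hL1 hL2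
      refine ⟨L1 ++ L2.tail, hglue, ?_⟩
      rw [hsum, hL1s, hL2s, chainSum_cons_cons]

end Seg

section Key

variable {Vo : Type*} {wo σo : Vo → Vo → ℝ} {n : Vo → Vo → ℕ} {Ep : Set (Vo × Vo)}

lemma key (hwo_symm : ∀ x y, wo x y = wo y x) (hσo_symm : ∀ x y, σo x y = σo y x)
    (hσo_pos : ∀ x y, 0 < wo x y → 0 < σo x y) :
    ∀ N : ℕ, ∀ L : List (MV wo n Ep), L.length ≤ N →
      ((∀ u y : Vo, L.head? = some (Sum.inl u) → L.getLast? = some (Sum.inl y) →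
          L.Chain' (fun a b => 0 < mw wo n Ep a b) →
          ∃ l : List Vo, isPath wo u y l ∧
            chainSum σo l ≤ chainSum (mσ wo σo n Ep) L) ∧
       (∀ (p : NewV wo n Ep) (M : List (MV wo n Ep)) (y : Vo),
          L = Sum.inr p :: M → L.getLast? = some (Sum.inl y) →
          L.Chain' (fun a b => 0 < mw wo n Ep a b) →
          ∃ (v : Vo) (l : List Vo), isPath wo v y l ∧
            ((v = p.val.1 ∧
                (p.val.2.2 : ℝ) * (σo p.val.1 p.val.2.1 / (n p.val.1 p.val.2.1 : ℝ)) +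
                  chainSum σo l ≤ chainSum (mσ wo σo n Ep) L) ∨
             (v = p.val.2.1 ∧
                ((n p.val.1 p.val.2.1 - p.val.2.2 : ℕ) : ℝ) *
                    (σo p.val.1 p.val.2.1 / (n p.val.1 p.val.2.1 : ℝ)) +
                  chainSum σo l ≤ chainSum (mσ wo σo n Ep) L)))) := by
  intro N
  induction N with
  | zero =>
    intro L hL
    have : L = [] := List.length_eq_zero_iff.mp (Nat.le_zero.mp hL)
    subst this
    constructor
    · intro u y h1; simp at h1
    · intro p M y h1; simp at h1
  | succ N ih =>
    intro L hL
    constructor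
    · -- A part
      intro u y hh hl hc
      match L, hh with
      | [Sum.inl u'], hh =>
        have hu : u' = u := by simpa using hh
        subst hu
        have hy : u' = y := by simpa using hl
        subst hy
        exact ⟨[u'], ⟨rfl, rfl, List.isChain_singleton _⟩, le_refl 0⟩
      | Sum.inl u' :: Sum.inl v :: M, hh =>
        simp only [List.Chain'] at hc; rw [List.isChain_cons_cons] at hc
        rw [mw_inl_inl] at hc
        exact absurd hc.1 (lt_irrefl 0)
      | Sum.inl u' :: Sum.inr p :: M, hh =>
        have hu : u' = u := by simpa using hh
        subst hu
        simp only [List.Chain'] at hc; rw [List.isChain_cons_cons] at hc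
        rw [List.getLast?_cons_cons] at hl
        have hlen : (Sum.inr p :: M : List (MV wo n Ep)).length ≤ N := by
          simp at hL ⊢; omega
        obtain ⟨v, l, hvl, hbound⟩ :=
          (ih _ hlen).2 p M y rfl hl hc.2
        obtain ⟨hpE, hwab, hi1, hin⟩ := p.property
        have hn2 : 2 ≤ n p.val.1 p.val.2.1 := by omega
        have hs0 : 0 < σo p.val.1 p.val.2.1 / (n p.val.1 p.val.2.1 : ℝ) := by
          have h1 := hσo_pos _ _ hwab
          positivity
        have hσn : σo p.val.1 p.val.2.1
            = (n p.val.1 p.val.2.1 : ℝ) * (σo p.val.1 p.val.2.1 / (n p.val.1 p.val.2.1 : ℝ)) := by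
          field_simp
        have hcond := mw_inl_inr_pos hc.1
        have hmσ : mσ wo σo n Ep (Sum.inl u') (Sum.inr p)
            = σo p.val.1 p.val.2.1 / (n p.val.1 p.val.2.1 : ℝ) := mσ_inl_inr hcond
        rw [chainSum_cons_cons, hmσ]
        rcases hbound with ⟨hv, hb1⟩ | ⟨hv, hb1⟩
        · -- v = p.val.1
          rcases hcond with ⟨hu1, hi1'⟩ | ⟨hu1, hi1'⟩
          · -- u' = p.val.1 : loop, drop
            refine ⟨l, by rw [hu1, ← hv]; exact hvl, ?_⟩
            have hicast : (1:ℝ) ≤ (p.val.2.2 : ℝ) := by exact_mod_cast hi1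
            nlinarith
          · -- u' = p.val.2.1, v = p.val.1 : cross edge
            obtain ⟨t, rfl⟩ : ∃ t, l = v :: t := by
              obtain ⟨g1, -, -⟩ := hvl
              cases l with
              | nil => simp at g1
              | cons c t => simp at g1; exact ⟨t, by rw [g1]⟩
            refine ⟨u' :: v :: t, ⟨rfl, ?_, ?_⟩, ?_⟩
            · rw [List.getLast?_cons_cons]; exact hvl.2.1
            · simp only [List.Chain']; rw [List.isChain_cons_cons]
              refine ⟨?_, hvl.2.2⟩
              rw [hu1, hv, hwo_symm]; exact hwab
            · rw [chainSum_cons_cons]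
              have hσuv : σo u' v = σo p.val.1 p.val.2.1 := by
                rw [hu1, hv, hσo_symm]
              have hiv : ((p.val.2.2 : ℕ) : ℝ) = (n p.val.1 p.val.2.1 : ℝ) - 1 := by
                rw [hi1']
                push_cast [Nat.cast_sub (by omega : 1 ≤ n p.val.1 p.val.2.1)]
                ring
              rw [hσuv]
              rw [hiv] at hb1
              linarith [hσn, hb1]
        · -- v = p.val.2.1
          rcases hcond with ⟨hu1, hi1'⟩ | ⟨hu1, hi1'⟩
          · -- u' = p.val.1, v = p.val.2.1 : cross edge
            obtain ⟨t, rfl⟩ : ∃ t, l = v :: t := by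
              obtain ⟨g1, -, -⟩ := hvl
              cases l with
              | nil => simp at g1
              | cons c t => simp at g1; exact ⟨t, by rw [g1]⟩
            refine ⟨u' :: v :: t, ⟨rfl, ?_, ?_⟩, ?_⟩
            · rw [List.getLast?_cons_cons]; exact hvl.2.1
            · simp only [List.Chain']; rw [List.isChain_cons_cons]
              refine ⟨?_, hvl.2.2⟩
              rw [hu1, hv]; exact hwab
            · rw [chainSum_cons_cons]
              have hσuv : σo u' v = σo p.val.1 p.val.2.1 := by rw [hu1, hv]
              have hiv : ((n p.val.1 p.val.2.1 - p.val.2.2 : ℕ) : ℝ)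
                  = (n p.val.1 p.val.2.1 : ℝ) - 1 := by
                rw [hi1']
                push_cast [Nat.cast_sub (by omega : 1 ≤ n p.val.1 p.val.2.1)]
                ring
              rw [hσuv]
              rw [hiv] at hb1
              linarith [hσn, hb1]
          · -- u' = p.val.2.1, v = p.val.2.1 : loop
            refine ⟨l, by rw [hu1, ← hv]; exact hvl, ?_⟩
            have h1' : (1:ℝ) ≤ ((n p.val.1 p.val.2.1 - p.val.2.2 : ℕ) : ℝ) := by
              have : 1 ≤ n p.val.1 p.val.2.1 - p.val.2.2 := by omega
              exact_mod_cast this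
            nlinarith
    · -- C part
      intro p M y hLM hl hc
      subst hLM
      obtain ⟨hpE, hwab, hi1, hin⟩ := p.property
      have hn2 : 2 ≤ n p.val.1 p.val.2.1 := by omega
      have hs0 : 0 < σo p.val.1 p.val.2.1 / (n p.val.1 p.val.2.1 : ℝ) := by
        have h1 := hσo_pos _ _ hwab
        positivity
      match M, hl with
      | [], hl => simp at hl
      | Sum.inl v :: M', hl =>
        simp only [List.Chain'] at hc; rw [List.isChain_cons_cons] at hc
        have hcond := mw_inr_inl_pos hc.1
        have hmσ : mσ wo σo n Ep (Sum.inr p) (Sum.inl v)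
            = σo p.val.1 p.val.2.1 / (n p.val.1 p.val.2.1 : ℝ) := mσ_inr_inl hcond
        rw [List.getLast?_cons_cons] at hl
        have hlen : (Sum.inl v :: M' : List (MV wo n Ep)).length ≤ N := by
          simp at hL ⊢; omega
        obtain ⟨l, hvl, hbound⟩ := (ih _ hlen).1 v y rfl hl hc.2
        refine ⟨v, l, hvl, ?_⟩
        rw [chainSum_cons_cons, hmσ]
        rcases hcond with ⟨hv, hi'⟩ | ⟨hv, hi'⟩
        · refine Or.inl ⟨hv, ?_⟩
          rw [hi']
          push_cast
          linarith
        · refine Or.inr ⟨hv, ?_⟩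
          rw [hi']
          have h9 : n p.val.1 p.val.2.1 - (n p.val.1 p.val.2.1 - 1) = 1 := by omega
          rw [h9]
          push_cast
          linarith
      | Sum.inr q :: M', hl =>
        simp only [List.Chain'] at hc; rw [List.isChain_cons_cons] at hc
        have hcond := mw_inr_inr_pos hc.1
        have hmσ : mσ wo σo n Ep (Sum.inr p) (Sum.inr q)
            = σo p.val.1 p.val.2.1 / (n p.val.1 p.val.2.1 : ℝ) := mσ_inr_inr hcond
        rw [List.getLast?_cons_cons] at hl
        have hlen : (Sum.inr q :: M' : List (MV wo n Ep)).length ≤ N := by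
          simp at hL ⊢; omega
        obtain ⟨v, l, hvl, hbound⟩ := (ih _ hlen).2 q M' y rfl hl hc.2
        obtain ⟨hqa, hqb, hij⟩ := hcond
        have hj1 : 1 ≤ q.val.2.2 := q.property.2.2.1
        have hjn : q.val.2.2 ≤ n q.val.1 q.val.2.1 - 1 := q.property.2.2.2
        have hnq : n q.val.1 q.val.2.1 = n p.val.1 p.val.2.1 := by rw [hqa, hqb]
        have hσq : σo q.val.1 q.val.2.1 = σo p.val.1 p.val.2.1 := by rw [hqa, hqb]
        refine ⟨v, l, hvl, ?_⟩
        rw [chainSum_cons_cons, hmσ]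
        rcases hbound with ⟨hv, hb1⟩ | ⟨hv, hb1⟩
        · refine Or.inl ⟨by rw [hv, hqa], ?_⟩
          rw [hσq, hnq] at hb1
          have hij' : ((p.val.2.2 : ℕ) : ℝ) ≤ ((q.val.2.2 : ℕ) : ℝ) + 1 := by
            have : p.val.2.2 ≤ q.val.2.2 + 1 := by omega
            exact_mod_cast this
          nlinarith [mul_le_mul_of_nonneg_right hij' hs0.le]
        · refine Or.inr ⟨by rw [hv, hqb], ?_⟩
          rw [hσq, hnq] at hb1
          have hij' : ((n p.val.1 p.val.2.1 - p.val.2.2 : ℕ) : ℝ)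
              ≤ ((n p.val.1 p.val.2.1 - q.val.2.2 : ℕ) : ℝ) + 1 := by
            have : n p.val.1 p.val.2.1 - p.val.2.2
                ≤ (n p.val.1 p.val.2.1 - q.val.2.2) + 1 := by omega
            exact_mod_cast this
          nlinarith [mul_le_mul_of_nonneg_right hij' hs0.le]

end Key

/-- The adapted path metric of the modified graph, restricted to the original
vertex set, coincides with the adapted path metric of the original graph:
`d_σ(x, y) = d_{σ_o}(x, y)` for all `x, y ∈ V_o`. -/
theorem stmt_7 {Vo : Type*} (wo σo : Vo → Vo → ℝ) (μo : Vo → ℝ)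
    (n : Vo → Vo → ℕ) (Ep : Set (Vo × Vo))
    (hwo_symm : ∀ x y, wo x y = wo y x) (hwo_nonneg : ∀ x y, 0 ≤ wo x y)
    (hμo_pos : ∀ x, 0 < μo x)
    (hloc : ∀ x, {y | 0 < wo x y}.Finite)
    (hσo_symm : ∀ x y, σo x y = σo y x)
    (hσo_edge : ∀ x y, 0 < wo x y → 0 < σo x y ∧ σo x y ≤ 1)
    (hadapt : ∀ x, ∑' y, wo x y * σo x y ^ 2 ≤ μo x)
    (hn_symm : ∀ x y, n x y = n y x) (hn2 : ∀ x y, 0 < wo x y → 2 ≤ n x y)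
    (hEp_edge : ∀ p ∈ Ep, 0 < wo p.1 p.2)
    (hEp_orient : ∀ x y, 0 < wo x y → Xor' ((x, y) ∈ Ep) ((y, x) ∈ Ep))
    (hconn : ∀ x y : Vo, ∃ l : List Vo, isPath wo x y l) :
    ∀ x y : Vo,
      dPath (mw wo n Ep) (mσ wo σo n Ep) (Sum.inl x) (Sum.inl y) = dPath wo σo x y := by
  intro x y
  have hσo_pos : ∀ a b, 0 < wo a b → 0 < σo a b := fun a b h => (hσo_edge a b h).1
  unfold dPath
  set A := {s : ℝ | ∃ l : List Vo, isPath wo x y l ∧ s = chainSum σo l} with hA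
  set B := {s : ℝ | ∃ L : List (MV wo n Ep),
    isPath (mw wo n Ep) (Sum.inl x) (Sum.inl y) L ∧
    s = chainSum (mσ wo σo n Ep) L} with hB
  have hA_lb : ∀ a ∈ A, (0:ℝ) ≤ a := by
    rintro a ⟨l, hl, rfl⟩
    exact chainSum_nonneg σo (fun a b => 0 < wo a b)
      (fun a b h => (hσo_pos a b h).le) l hl.2.2
  have hAB : A ⊆ B := by
    rintro s ⟨l, hl, rfl⟩
    obtain ⟨L, hL, hLs⟩ := lift hwo_symm hσo_symm hn2 hEp_orient l x y hl
    exact ⟨L, hL, hLs.symm⟩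
  have hBA : ∀ b ∈ B, ∃ a ∈ A, a ≤ b := by
    rintro s ⟨L, hL, rfl⟩
    obtain ⟨l, hl, hle⟩ :=
      (key hwo_symm hσo_symm hσo_pos L.length L le_rfl).1 x y hL.1 hL.2.1 hL.2.2
    exact ⟨chainSum σo l, ⟨l, hl, rfl⟩, hle⟩
  have hA_ne : A.Nonempty := by
    obtain ⟨l, hl⟩ := hconn x y
    exact ⟨chainSum σo l, l, hl, rfl⟩
  have hB_ne : B.Nonempty := ⟨_, hAB hA_ne.choose_spec⟩
  have hB_lb : ∀ b ∈ B, (0:ℝ) ≤ b := by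
    intro b hb
    obtain ⟨a, ha, hab⟩ := hBA b hb
    exact (hA_lb a ha).trans hab
  refine le_antisymm (csInf_le_csInf ⟨0, hB_lb⟩ hA_ne hAB) ?_
  refine le_csInf hB_ne ?_
  intro b hb
  obtain ⟨a, ha, hab⟩ := hBA b hb
  exact (csInf_le ⟨0, hA_lb⟩ ha).trans hab
end
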